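/- Let m ∈ ℕ, x ∈ X_m, and e ∈ ℰ_m (a weakly increasing sequence in ℕ^{m+1}). Then x + e ∈ X_m. Moreover, setting y = x + e + x ∈ Y_m, if 𝔖(e + x) = 𝔖(x) and (x, e + x) ∈ S(y), then every interval in 𝔉(y) has cardinality 1. -/
import Mathlib


open Finset

/-- `X_m`: sequences `(x_0,…,x_m)` in `ℕ` with `x i ≤ x (i+1)` and `x i < x (i+2)`. -/
def IsX (m : ℕ) (x : ℕ → ℕ) : Prop :=
  (∀ i, i < m → x i ≤ x (i + 1)) ∧ (∀ i, i + 2 ≤ m → x i < x (i + 2))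

/-- `Y_m`: sequences with `y i ≤ y (i+1)` and `y i + 2 ≤ y (i+2)`. -/
def IsY (m : ℕ) (y : ℕ → ℕ) : Prop :=
  (∀ i, i < m → y i ≤ y (i + 1)) ∧ (∀ i, i + 2 ≤ m → y i + 2 ≤ y (i + 2))

/-- `ℰ_m`: weakly increasing sequences. -/
def IsE (m : ℕ) (e : ℕ → ℕ) : Prop := ∀ i, i < m → e i ≤ e (i + 1)

/-- `𝔖(x)`: indices `i ∈ [0,m]` with `x (i-1) < x i < x (i+1)`,
with conventions `x_{-1} = -∞`, `x_{m+1} = +∞`. -/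
def SS (m : ℕ) (x : ℕ → ℕ) : Finset ℕ :=
  (Finset.range (m + 1)).filter
    (fun i => (i = 0 ∨ x (i - 1) < x i) ∧ (i = m ∨ x i < x (i + 1)))

/-- `𝔉(y)`: intervals `[i,j] ⊆ [0,m]` with
`y_{i-1}-(i-1) < y_i-i = ⋯ = y_j-j < y_{j+1}-(j+1)` (conventions `±∞` at the ends),
encoded as pairs `(i, j)`. -/
def FF (m : ℕ) (y : ℕ → ℕ) : Finset (ℕ × ℕ) :=
  ((Finset.range (m + 1)) ×ˢ (Finset.range (m + 1))).filter
    (fun p => p.1 ≤ p.2 ∧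
      (p.1 = 0 ∨ ((y (p.1 - 1) : ℤ) - ((p.1 : ℤ) - 1) < (y p.1 : ℤ) - (p.1 : ℤ))) ∧
      (p.2 = m ∨ ((y p.2 : ℤ) - (p.2 : ℤ) < (y (p.2 + 1) : ℤ) - ((p.2 : ℤ) + 1))) ∧
      (∀ k ∈ Finset.Ico p.1 p.2, ((y k : ℤ) - (k : ℤ) = (y (k + 1) : ℤ) - ((k : ℤ) + 1))))

/-- `𝔉'(y)`: the intervals in `𝔉(y)` of odd cardinality. -/
def FF' (m : ℕ) (y : ℕ → ℕ) : Finset (ℕ × ℕ) :=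
  (FF m y).filter (fun p => Odd (p.2 - p.1 + 1))

/-- `R(y)`: endpoints of intervals in `𝔉(y)`. -/
def RR (m : ℕ) (y : ℕ → ℕ) : Finset ℕ :=
  (Finset.range (m + 1)).filter (fun k => ∃ p ∈ FF m y, k = p.1 ∨ k = p.2)

/-- `R_0(y)`: those `k` with `[k,k] ∈ 𝔉(y)`. -/
def RR0 (m : ℕ) (y : ℕ → ℕ) : Finset ℕ :=
  (Finset.range (m + 1)).filter (fun k => (k, k) ∈ FF m y)

/-- `S(y)`: pairs `(x, x') ∈ X_m × X_m` with `x + x' = y`,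
`𝔖(x) ∪ 𝔖(x') = R(y)`, `𝔖(x) ∩ 𝔖(x') = R_0(y)`, and `𝔖(x') = ∅` if `𝔉'(y) = ∅`. -/
def IsS (m : ℕ) (y x x' : ℕ → ℕ) : Prop :=
  IsX m x ∧ IsX m x' ∧ (∀ i, i ≤ m → x i + x' i = y i) ∧
  SS m x ∪ SS m x' = RR m y ∧ SS m x ∩ SS m x' = RR0 m y ∧
  (FF' m y = ∅ → SS m x' = ∅)

theorem stmt16 (m : ℕ) (x e : ℕ → ℕ) (hx : IsX m x) (he : IsE m e) :
    IsX m (fun i => x i + e i) ∧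
    (SS m (fun i => x i + e i) = SS m x →
      IsS m (fun i => x i + e i + x i) x (fun i => x i + e i) →
      ∀ p ∈ FF m (fun i => x i + e i + x i), p.1 = p.2) := by
  constructor
  · constructor
    · intro i hi
      exact Nat.add_le_add (hx.1 i hi) (he i hi)
    · intro i hi
      have h1 : i < m := by omega
      have h2 : i + 1 < m := by omega
      exact Nat.add_lt_add_of_lt_of_le (hx.2 i hi) (le_trans (he i h1) (he (i + 1) h2))
  · intro hSS hS p hp
    obtain ⟨_, _, _, hUnion, hInter, _⟩ := hS
    have hRR : RR m (fun i => x i + e i + x i) = RR0 m (fun i => x i + e i + x i) := by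
      rw [← hUnion, ← hInter, hSS]
      simp
    by_contra hne
    have hp' := hp
    simp only [FF, Finset.mem_filter, Finset.mem_product, Finset.mem_range] at hp'
    obtain ⟨⟨h1, h2⟩, hle, hi, hj, heq⟩ := hp'
    have hlt : p.1 < p.2 := lt_of_le_of_ne hle hne
    have hmem : p.1 ∈ RR m (fun i => x i + e i + x i) := by
      simp only [RR, Finset.mem_filter, Finset.mem_range]
      exact ⟨h1, p, hp, Or.inl rfl⟩
    rw [hRR] at hmem
    simp only [RR0, Finset.mem_filter, Finset.mem_range] at hmem
    obtain ⟨_, hmem⟩ := hmem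
    simp only [FF, Finset.mem_filter, Finset.mem_product, Finset.mem_range] at hmem
    obtain ⟨_, _, _, hcond, _⟩ := hmem
    have hkey := heq p.1 (Finset.mem_Ico.mpr ⟨le_refl _, hlt⟩)
    rcases hcond with h | h
    · omega
    · omega
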